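/- Let v ∈ ℝ^m be a vector with at most s ≤ m/2 nonzero entries, and let t ≤ s/8 be a positive integer. Then there exist at least min{ C(m−1, t−1), (s/(8t))^t } subsets T ⊆ {1,...,m} of cardinality t such that Σ_{i∈T} v_i² ≥ t‖v‖²/(2s). -/

import Mathlib

open Finset

/-- (n/k)^k ≤ C(n,k) for k ≤ n. -/
lemma aux_choose_pow : ∀ (k n : ℕ), k ≤ n → ((n : ℝ) / k) ^ k ≤ (n.choose k : ℝ) := by
  intro k
  induction k with
  | zero => intro n _; simp
  | succ k ih =>
    intro n h
    have hn : 0 < n := lt_of_lt_of_le (Nat.succ_pos k) h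
    obtain ⟨n, rfl⟩ : ∃ n', n = n' + 1 := ⟨n - 1, (Nat.succ_pred_eq_of_pos hn).symm⟩
    have hkn : k ≤ n := Nat.succ_le_succ_iff.mp h
    have h1 : ((n : ℝ) / k) ^ k ≤ (n.choose k : ℝ) := ih n hkn
    have hid : ((n + 1 : ℕ) : ℝ) * (n.choose k : ℝ) = ((n + 1).choose (k + 1) : ℝ) * ((k + 1 : ℕ) : ℝ) := by
      exact_mod_cast congrArg (Nat.cast : ℕ → ℝ) (Nat.add_one_mul_choose_eq n k)
    rcases Nat.eq_zero_or_pos k with hk0 | hk0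
    · subst hk0; simp [Nat.choose_one_right]
    · have hk0' : (0 : ℝ) < k := by exact_mod_cast hk0
      have hkk : (0 : ℝ) < ((k : ℝ) + 1) := by positivity
      have hstep : (((n : ℝ) + 1) / ((k : ℝ) + 1)) ≤ (n : ℝ) / k := by
        rw [div_le_div_iff₀ hkk hk0']
        have : (k : ℝ) ≤ n := by exact_mod_cast hkn
        nlinarith
      have hnn : (0 : ℝ) ≤ ((n : ℝ) + 1) / ((k : ℝ) + 1) := by positivity
      have hcast : (((n + 1 : ℕ) : ℝ) / ((k + 1 : ℕ) : ℝ)) ^ (k + 1)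
          = (((n : ℝ) + 1) / ((k : ℝ) + 1)) * (((n : ℝ) + 1) / ((k : ℝ) + 1)) ^ k := by
        push_cast; ring
      rw [hcast]
      calc (((n : ℝ) + 1) / ((k : ℝ) + 1)) * (((n : ℝ) + 1) / ((k : ℝ) + 1)) ^ k
          ≤ (((n : ℝ) + 1) / ((k : ℝ) + 1)) * ((n : ℝ) / k) ^ k := by
            apply mul_le_mul_of_nonneg_left _ hnn
            exact pow_le_pow_left₀ (by positivity) hstep k
        _ ≤ (((n : ℝ) + 1) / ((k : ℝ) + 1)) * (n.choose k : ℝ) := by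
            apply mul_le_mul_of_nonneg_left h1 hnn
        _ = ((n + 1).choose (k + 1) : ℝ) := by
            rw [div_mul_eq_mul_div]
            rw [div_eq_iff (by positivity)]
            push_cast at hid ⊢
            linarith [hid]

/-- Product family count: cores from L (each with big sum) times fillers from Lᶜ. -/
lemma aux_count {m : ℕ} (v : Fin m → ℝ) (τ : ℝ) (t c : ℕ) (L : Finset (Fin m)) (hct : c ≤ t)
    (hgood : ∀ C ∈ Finset.powersetCard c L, τ ≤ ∑ i ∈ C, (v i) ^ 2) :
    (L.card.choose c) * ((m - L.card).choose (t - c)) ≤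
      ((Finset.powersetCard t (Finset.univ : Finset (Fin m))).filter
        (fun T => τ ≤ ∑ i ∈ T, (v i) ^ 2)).card := by
  classical
  have hcard : ((Finset.powersetCard c L) ×ˢ (Finset.powersetCard (t - c) Lᶜ)).card
      = (L.card.choose c) * ((m - L.card).choose (t - c)) := by
    simp [Finset.card_powersetCard, Finset.card_compl]
  rw [← hcard]
  apply Finset.card_le_card_of_injOn (fun q => q.1 ∪ q.2)
  · rintro ⟨C, F⟩ hq
    simp only [Finset.mem_coe, Finset.mem_product, Finset.mem_powersetCard] at hq
    obtain ⟨⟨hCL, hCc⟩, hFL, hFc⟩ := hq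
    have hdisj : Disjoint C F := by
      refine Finset.disjoint_left.mpr (fun a haC haF => ?_)
      exact (Finset.mem_compl.mp (hFL haF)) (hCL haC)
    simp only [Finset.mem_coe, Finset.mem_filter, Finset.mem_powersetCard]
    refine ⟨⟨Finset.subset_univ _, ?_⟩, ?_⟩
    · rw [Finset.card_union_of_disjoint hdisj, hCc, hFc]; omega
    · calc τ ≤ ∑ i ∈ C, (v i) ^ 2 := hgood C (Finset.mem_powersetCard.mpr ⟨hCL, hCc⟩)
        _ ≤ ∑ i ∈ C ∪ F, (v i) ^ 2 := by
            apply Finset.sum_le_sum_of_subset_of_nonneg Finset.subset_union_left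
            intros; positivity
  · rintro ⟨C1, F1⟩ h1 ⟨C2, F2⟩ h2 heq
    simp only [Finset.mem_coe, Finset.mem_product, Finset.mem_powersetCard] at h1 h2
    have key : ∀ (C F : Finset (Fin m)), C ⊆ L → F ⊆ Lᶜ → (C ∪ F) ∩ L = C := by
      intro C F hCL hFL
      rw [Finset.union_inter_distrib_right, Finset.inter_eq_left.mpr hCL]
      have : F ∩ L = ∅ := by
        refine Finset.eq_empty_of_forall_notMem (fun a ha => ?_)
        obtain ⟨haF, haL⟩ := Finset.mem_inter.mp ha
        exact (Finset.mem_compl.mp (hFL haF)) haL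
      rw [this, Finset.union_empty]
    have key2 : ∀ (C F : Finset (Fin m)), C ⊆ L → F ⊆ Lᶜ → (C ∪ F) \ L = F := by
      intro C F hCL hFL
      rw [Finset.union_sdiff_distrib]
      have h1' : C \ L = ∅ := Finset.sdiff_eq_empty_iff_subset.mpr hCL
      have h2' : F \ L = F := by
        refine Finset.sdiff_eq_self_iff_disjoint.mpr ?_
        refine Finset.disjoint_left.mpr (fun a haF haL => ?_)
        exact (Finset.mem_compl.mp (hFL haF)) haL
      rw [h1', h2', Finset.empty_union]
    simp only at heq
    have e1 : C1 = C2 := by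
      rw [← key C1 F1 h1.1.1 h1.2.1, ← key C2 F2 h2.1.1 h2.2.1, heq]
    have e2 : F1 = F2 := by
      rw [← key2 C1 F1 h1.1.1 h1.2.1, ← key2 C2 F2 h2.1.1 h2.2.1, heq]
    exact Prod.ext e1 e2

lemma aux_two_pow (j : ℕ) (hj : 2 ≤ j) : 2 * (j + 3) ≤ 3 * 2 ^ j := by
  induction j with
  | zero => omega
  | succ j ih =>
    rcases Nat.lt_or_ge j 2 with hj2 | hj2
    · interval_cases j <;> simp_all
    · have := ih hj2
      have h2 : (2:ℕ)^(j+1) = 2 * 2^j := by ring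
      omega

lemma aux_nl (j t : ℕ) (h : 2 ^ j < t) : (j + 3) * ((t - 1) / 2 ^ j + 1) ≤ 3 * t := by
  have hβ0 : 0 < 2 ^ j := Nat.pow_pos (by norm_num)
  have hdiv : 2 ^ j * ((t - 1) / 2 ^ j) ≤ t - 1 := Nat.mul_div_le (t-1) (2^j)
  -- so 2^j * c ≤ t - 1 + 2^j  where c = (t-1)/2^j + 1
  set c := (t - 1) / 2 ^ j + 1 with hc
  have hcb : 2 ^ j * c ≤ t - 1 + 2 ^ j := by
    rw [hc, Nat.mul_add, Nat.mul_one]; omega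
  match j, h with
  | 0, h => simp [hc]; omega
  | 1, h =>
    -- c ≤ (t+1)/2 : 2*c ≤ t+1; need 4c ≤ 3t, t ≥ 3
    have h2 : 2 * c ≤ t + 1 := by have := hcb; simp at this; omega
    have ht3 : 3 ≤ t := by simp at h; omega
    omega
  | (j+2), h =>
    have h2p : 2 * ((j+2) + 3) ≤ 3 * 2 ^ (j+2) := aux_two_pow (j+2) (by omega)
    -- (j+5) * c * 2^(j+2) ≤ (j+5)*(t-1+2^(j+2)) ≤ (j+5)*2t ≤ 3*2^(j+2)*t
    have hβt : 2 ^ (j+2) ≤ t - 1 := by omega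
    have key : ((j+2) + 3) * (2 ^ (j+2) * c) ≤ 3 * 2 ^ (j+2) * t := by
      calc ((j+2) + 3) * (2 ^ (j+2) * c) ≤ ((j+2) + 3) * (t - 1 + 2 ^ (j+2)) :=
            Nat.mul_le_mul_left _ hcb
        _ ≤ ((j+2) + 3) * (2 * t) := by
            apply Nat.mul_le_mul_left; omega
        _ = (2 * ((j+2) + 3)) * t := by ring
        _ ≤ (3 * 2 ^ (j+2)) * t := Nat.mul_le_mul_right _ h2p
        _ = 3 * 2 ^ (j+2) * t := by ring
    have : ((j+2) + 3) * c * 2 ^ (j+2) ≤ 3 * t * 2 ^ (j+2) := by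
      calc ((j+2) + 3) * c * 2 ^ (j+2) = ((j+2) + 3) * (2 ^ (j+2) * c) := by ring
        _ ≤ 3 * 2 ^ (j+2) * t := key
        _ = 3 * t * 2 ^ (j+2) := by ring
    exact Nat.le_of_mul_le_mul_right this hβ0

set_option maxHeartbeats 4000000 in
theorem stmt6 (m s t : ℕ) (v : Fin m → ℝ)
    (hsupp : (Finset.univ.filter (fun i => v i ≠ 0)).card ≤ s)
    (hsm : (s : ℝ) ≤ m / 2) (ht : 0 < t) (hts : (t : ℝ) ≤ s / 8) :
    min (((m - 1).choose (t - 1) : ℕ) : ℝ) (((s : ℝ) / (8 * t)) ^ t) ≤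
      (((Finset.powersetCard t (Finset.univ : Finset (Fin m))).filter
        (fun T => (t : ℝ) * (∑ i, (v i) ^ 2) / (2 * s) ≤ ∑ i ∈ T, (v i) ^ 2)).card : ℝ) := by
  classical
  have ht8 : 8 * t ≤ s := by
    have h8 : ((8 * t : ℕ) : ℝ) ≤ (s : ℝ) := by push_cast; linarith
    exact_mod_cast h8
  have hs2m : 2 * s ≤ m := by
    have h2 : ((2 * s : ℕ) : ℝ) ≤ (m : ℝ) := by push_cast; linarith
    exact_mod_cast h2
  have hs0 : 0 < s := by omega
  have hm0 : 0 < m := by omega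
  set W := ∑ i, (v i) ^ 2 with hWdef
  have hWnn : 0 ≤ W := Finset.sum_nonneg (fun i _ => sq_nonneg _)
  set x := (s : ℝ) / (8 * (t : ℝ)) with hxdef
  have hx1 : 1 ≤ x := by
    rw [hxdef, le_div_iff₀ (by positivity)]
    have : (8 * t : ℝ) ≤ s := by push_cast at ht8 ⊢; exact_mod_cast ht8
    linarith
  have hx0 : 0 < x := lt_of_lt_of_le one_pos hx1
  have hxs : 8 * x * t = s := by rw [hxdef]; field_simp
  by_cases hA : ∃ i, (t : ℝ) * W / (2 * s) ≤ (v i) ^ 2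
  · -- Case A : one heavy coordinate
    obtain ⟨i₀, hi₀⟩ := hA
    have hgood : ∀ C ∈ Finset.powersetCard 1 ({i₀} : Finset (Fin m)),
        (t : ℝ) * W / (2 * s) ≤ ∑ i ∈ C, (v i) ^ 2 := by
      intro C hC
      rw [Finset.mem_powersetCard] at hC
      have hCe : C = {i₀} := by
        apply Finset.eq_of_subset_of_card_le hC.1
        rw [hC.2]; simp
      rw [hCe, Finset.sum_singleton]; exact hi₀
    have hcnt := aux_count v ((t : ℝ) * W / (2 * s)) t 1 {i₀} ht hgood
    simp only [Finset.card_singleton, Nat.choose_self, one_mul] at hcnt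
    refine le_trans (min_le_left _ _) ?_
    exact_mod_cast hcnt
  · -- Case B : all coordinates light
    push_neg at hA
    have hW0 : 0 < W := by
      rcases lt_or_eq_of_le hWnn with h | h
      · exact h
      · exfalso
        have h0 := hA ⟨0, hm0⟩
        rw [← h] at h0
        have : (t : ℝ) * 0 / (2 * s) = 0 := by ring
        rw [this] at h0
        nlinarith [sq_nonneg (v ⟨0, hm0⟩)]
    set u := W / (2 * (s : ℝ)) with hudef
    have hu0 : 0 < u := by rw [hudef]; positivity
    have hτu : (t : ℝ) * W / (2 * s) = (t : ℝ) * u := by rw [hudef]; ring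
    have hA' : ∀ i, (v i) ^ 2 < (t : ℝ) * u := by
      intro i; rw [← hτu]; exact hA i
    have hQmass : W / 2 ≤ ∑ i ∈ Finset.univ.filter (fun i => u ≤ (v i) ^ 2), (v i) ^ 2 := by
      classical
      have hsplit := Finset.sum_filter_add_sum_filter_not Finset.univ
        (fun i => u ≤ (v i) ^ 2) (fun i => (v i) ^ 2)
      have hlight : ∑ i ∈ Finset.univ.filter (fun i => ¬ u ≤ (v i) ^ 2), (v i) ^ 2 ≤ W / 2 := by
        set R := Finset.univ.filter (fun i => ¬ u ≤ (v i) ^ 2) with hR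
        have e : ∑ i ∈ R.filter (fun i => v i ≠ 0), (v i) ^ 2 = ∑ i ∈ R, (v i) ^ 2 := by
          apply Finset.sum_filter_of_ne
          intro i _ hne h0
          rw [h0] at hne; simp at hne
        rw [← e]
        have hcard : (R.filter (fun i => v i ≠ 0)).card ≤ s := by
          refine le_trans (Finset.card_le_card ?_) hsupp
          intro i hi
          rw [Finset.mem_filter] at hi ⊢
          exact ⟨Finset.mem_univ _, hi.2⟩
        have hb : ∑ i ∈ R.filter (fun i => v i ≠ 0), (v i) ^ 2
            ≤ (R.filter (fun i => v i ≠ 0)).card • u := by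
          apply Finset.sum_le_card_nsmul
          intro i hi
          rw [Finset.mem_filter, hR, Finset.mem_filter] at hi
          exact le_of_lt (not_le.mp hi.1.2)
        rw [nsmul_eq_mul] at hb
        have : ((R.filter (fun i => v i ≠ 0)).card : ℝ) * u ≤ s * u := by
          apply mul_le_mul_of_nonneg_right _ (le_of_lt hu0)
          exact_mod_cast hcard
        have hsu : (s : ℝ) * u = W / 2 := by
          rw [hudef]; field_simp
        linarith
      rw [← hWdef] at hsplit
      linarith
    set b := Nat.log 2 (s / (8 * t)) + 1 with hbdef
    have hb1 : 1 ≤ b := by omega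
    have hq1 : 1 ≤ s / (8 * t) := (Nat.one_le_div_iff (by omega)).mpr ht8
    have hxlow : (2 : ℝ) ^ (b - 1) ≤ x := by
      have h1 : 2 ^ (b - 1) ≤ s / (8 * t) := by
        rw [hbdef]; simpa using Nat.pow_log_le_self 2 (by omega : s / (8 * t) ≠ 0)
      have h2 : ((s / (8 * t) : ℕ) : ℝ) ≤ (s : ℝ) / ((8 * t : ℕ) : ℝ) := Nat.cast_div_le
      have h3 : ((2 ^ (b - 1) : ℕ) : ℝ) ≤ ((s / (8 * t) : ℕ) : ℝ) := by exact_mod_cast h1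
      rw [hxdef]
      push_cast at h2 h3 ⊢
      linarith
    have hxhigh : x < (2 : ℝ) ^ b := by
      have h1 : s / (8 * t) < 2 ^ b := by
        rw [hbdef]; exact Nat.lt_pow_succ_log_self (by norm_num) _
      have h2 : s < (s / (8 * t) + 1) * (8 * t) :=
        (Nat.div_lt_iff_lt_mul (by omega : 0 < 8 * t)).mp (Nat.lt_succ_self _)
      have h2' : (s : ℝ) < (((s / (8 * t) : ℕ) : ℝ) + 1) * ((8 * t : ℕ) : ℝ) := by
        exact_mod_cast h2
      have h3 : (((s / (8 * t) : ℕ) : ℝ) + 1) ≤ (2 : ℝ) ^ b := by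
        have h4 : s / (8 * t) + 1 ≤ 2 ^ b := h1
        exact_mod_cast h4
      rw [hxdef, div_lt_iff₀ (by positivity)]
      have h5 : (0:ℝ) < ((8 * t : ℕ) : ℝ) := by positivity
      have h6 := mul_le_mul_of_nonneg_right h3 (le_of_lt h5)
      push_cast at h2' h6 ⊢
      nlinarith [h2', h6]
    by_cases hBa : ∃ j, j < b ∧ W / 2 ^ (j + 2) ≤ ∑ i ∈ Finset.univ.filter
        (fun i => 2 ^ j * u ≤ (v i) ^ 2 ∧ (v i) ^ 2 < 2 ^ (j + 1) * u), (v i) ^ 2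
    · -- Branch B-a : a dyadic level is heavy
      obtain ⟨j, hjb, hjm⟩ := hBa
      refine le_trans (min_le_right _ _) ?_
      classical
      set L := Finset.univ.filter
          (fun i => 2 ^ j * u ≤ (v i) ^ 2 ∧ (v i) ^ 2 < 2 ^ (j + 1) * u) with hLdef
      set P := (2:ℝ) ^ j with hPdef
      have hP0 : 0 < P := by positivity
      set ℓ := L.card with hldef
      -- L inside support
      have hLsupp : L ⊆ Finset.univ.filter (fun i => v i ≠ 0) := by
        intro i hi
        rw [hLdef, Finset.mem_filter] at hi
        rw [Finset.mem_filter]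
        refine ⟨Finset.mem_univ _, fun h0 => ?_⟩
        rw [h0] at hi
        have : (0:ℝ) < 2 ^ j * u := by positivity
        simp at hi
        nlinarith [hi.1]
      have hls : ℓ ≤ s := le_trans (Finset.card_le_card hLsupp) hsupp
      -- nonempty and 2^j < t
      have hne : L.Nonempty := by
        rcases Finset.eq_empty_or_nonempty L with h | h
        · exfalso; rw [h, Finset.sum_empty] at hjm
          have : (0:ℝ) < W / 2 ^ (j + 2) := by positivity
          linarith
        · exact h
      have hjt : 2 ^ j < t := by
        obtain ⟨i₁, hi₁⟩ := hne
        rw [hLdef, Finset.mem_filter] at hi₁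
        have h1 : (2:ℝ) ^ j * u ≤ (v i₁) ^ 2 := hi₁.2.1
        have h2 : (v i₁) ^ 2 < (t:ℝ) * u := hA' i₁
        have h3 : (2:ℝ) ^ j < (t:ℝ) := by
          have := lt_of_le_of_lt h1 h2
          exact lt_of_mul_lt_mul_right this (le_of_lt hu0)
        have h4 : ((2 ^ j : ℕ) : ℝ) < (t : ℝ) := by push_cast; exact h3
        exact_mod_cast h4
      have hjx : P ≤ x := by
        refine le_trans ?_ hxlow
        rw [hPdef]
        apply pow_le_pow_right₀ one_le_two
        omega
      -- lower bound on ℓ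
      have hℓlb : (s:ℝ) ≤ 4 * P ^ 2 * ℓ := by
        have hub : ∀ i ∈ L, (v i) ^ 2 ≤ 2 ^ (j+1) * u := by
          intro i hi; rw [hLdef, Finset.mem_filter] at hi; exact le_of_lt hi.2.2
        have h1 : W / 2 ^ (j + 2) ≤ (ℓ:ℝ) * (2 ^ (j+1) * u) := by
          refine le_trans hjm ?_
          have := Finset.sum_le_card_nsmul L (fun i => (v i) ^ 2) (2 ^ (j+1) * u) hub
          rwa [nsmul_eq_mul] at this
        have e1 : (2:ℝ) ^ (j + 2) = 4 * P := by rw [hPdef, pow_add]; ring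
        have e2 : (2:ℝ) ^ (j + 1) = 2 * P := by rw [hPdef, pow_add]; ring
        rw [e1, e2, hudef] at h1
        rw [div_le_iff₀ (by positivity)] at h1
        -- W ≤ ℓ * (2P * W/(2s)) * (4P)
        have h2 : (ℓ:ℝ) * (2 * P * (W / (2 * s))) * (4 * P) = (4 * P^2 * ℓ) * W / s := by
          field_simp
        rw [h2] at h1
        rw [le_div_iff₀ (by positivity)] at h1
        -- W * s ≤ 4P²ℓ W
        nlinarith [hW0]
      -- the core size c
      obtain ⟨c, hcdef⟩ : ∃ c, c = (t - 1) / 2 ^ j + 1 := ⟨_, rfl⟩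
      have hc0 : 0 < c := hcdef ▸ Nat.succ_pos _
      have hcb : t ≤ c * 2 ^ j := by
        have h1 : (t - 1) / 2 ^ j < c := by rw [hcdef]; exact Nat.lt_succ_self _
        have h2 : t - 1 < c * 2 ^ j := (Nat.div_lt_iff_lt_mul (by positivity)).mp h1
        omega
      have hct : c ≤ t := by
        have h1 := Nat.div_le_self (t - 1) (2 ^ j)
        rw [hcdef]; omega
      have hcub : c * 2 ^ j ≤ t - 1 + 2 ^ j := by
        have := Nat.div_mul_le_self (t - 1) (2 ^ j)
        calc c * 2 ^ j = (t - 1) / 2 ^ j * 2 ^ j + 2 ^ j := by rw [hcdef]; ring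
          _ ≤ t - 1 + 2 ^ j := by omega
      have hcP : (c:ℝ) * P ≤ 2 * t := by
        have h1 : c * 2 ^ j ≤ 2 * t := by
          have h2 : 2 ^ j ≤ t := le_of_lt hjt
          have h3 := hcub
          generalize hX : c * 2 ^ j = X at h3 ⊢
          omega
        have h2 : ((c * 2 ^ j : ℕ) : ℝ) ≤ ((2 * t : ℕ) : ℝ) := by exact_mod_cast h1
        push_cast at h2
        rw [hPdef]
        linarith
      -- c ≤ ℓ
      have hcl : c ≤ ℓ := by
        have h1 : (c:ℝ) * (4 * P ^ 2) ≤ (ℓ:ℝ) * (4 * P ^ 2) := by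
          calc (c:ℝ) * (4 * P ^ 2) = ((c:ℝ) * P) * (4 * P) := by ring
            _ ≤ (2 * t) * (4 * P) := by
                apply mul_le_mul_of_nonneg_right hcP (by positivity)
            _ = 8 * (t:ℝ) * P := by ring
            _ ≤ 8 * (t:ℝ) * x := by
                apply mul_le_mul_of_nonneg_left hjx (by positivity)
            _ = (s:ℝ) := by rw [← hxs]; ring
            _ ≤ 4 * P ^ 2 * ℓ := hℓlb
            _ = (ℓ:ℝ) * (4 * P ^ 2) := by ring
        have h2 : (c:ℝ) ≤ (ℓ:ℝ) := le_of_mul_le_mul_right h1 (by positivity)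
        exact_mod_cast h2
      -- goodness of cores
      have hgood : ∀ C ∈ Finset.powersetCard c L,
          (t : ℝ) * W / (2 * s) ≤ ∑ i ∈ C, (v i) ^ 2 := by
        intro C hC
        rw [Finset.mem_powersetCard] at hC
        have hlow : ∀ i ∈ C, P * u ≤ (v i) ^ 2 := by
          intro i hi
          have := hC.1 hi
          rw [hLdef, Finset.mem_filter] at this
          rw [hPdef]; exact this.2.1
        have h1 : (C.card:ℝ) * (P * u) ≤ ∑ i ∈ C, (v i) ^ 2 := by
          have := Finset.card_nsmul_le_sum C (fun i => (v i) ^ 2) (P * u) hlow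
          rwa [nsmul_eq_mul] at this
        rw [hC.2] at h1
        rw [hτu]
        have h2 : (t:ℝ) * u ≤ (c:ℝ) * (P * u) := by
          have h3 : (t:ℝ) ≤ (c:ℝ) * P := by
            have h4 : ((t:ℕ):ℝ) ≤ ((c * 2 ^ j : ℕ):ℝ) := by exact_mod_cast hcb
            push_cast at h4
            rw [hPdef]
            linarith
          calc (t:ℝ) * u ≤ ((c:ℝ) * P) * u := by
                apply mul_le_mul_of_nonneg_right h3 (le_of_lt hu0)
            _ = (c:ℝ) * (P * u) := by ring
        linarith
      have hcnt := aux_count v ((t : ℝ) * W / (2 * s)) t c L hct hgood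
      rw [← hldef] at hcnt
      -- exponent bound
      have hexp : (2:ℝ) ^ (j * c) ≤ (2:ℝ) ^ (3 * (t - c)) := by
        apply pow_le_pow_right₀ one_le_two
        have h := aux_nl j t hjt
        rw [← hcdef] at h
        have h2 : j * c + 3 * c ≤ 3 * t := by
          calc j * c + 3 * c = (j + 3) * c := by ring
            _ ≤ 3 * t := h
        generalize hA : j * c = A at h2 ⊢
        omega
      -- key chain
      have hkey : x ^ t ≤ (x / P) ^ c * (8 * x) ^ (t - c) := by
        have e1 : (x / P) ^ c * (8 * x) ^ (t - c)
            = (x ^ c * x ^ (t - c)) * ((2:ℝ) ^ (3 * (t - c)) / (2:ℝ) ^ (j * c)) := by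
          rw [div_pow, mul_pow]
          rw [hPdef, ← pow_mul]
          have e8 : (8:ℝ) ^ (t - c) = (2:ℝ) ^ (3 * (t - c)) := by
            rw [show (8:ℝ) = 2 ^ 3 by norm_num, ← pow_mul]
          rw [e8]
          field_simp
        have e2 : x ^ c * x ^ (t - c) = x ^ t := by
          rw [← pow_add]
          congr 1
          omega
        rw [e1, e2]
        have h1 : (1:ℝ) ≤ (2:ℝ) ^ (3 * (t - c)) / (2:ℝ) ^ (j * c) := by
          rw [le_div_iff₀ (by positivity)]
          simpa using hexp
        nlinarith [pow_pos hx0 t, pow_nonneg (le_of_lt hx0) t]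
      -- choose bounds
      have hs1 : (x / P) ^ c ≤ (ℓ.choose c : ℝ) := by
        have h1 : x / P ≤ (ℓ:ℝ) / c := by
          rw [div_le_div_iff₀ hP0 (by exact_mod_cast hc0)]
          -- x * c ≤ ℓ * P
          have h2 : x * c * (4 * P) ≤ (ℓ:ℝ) * P * (4 * P) := by
            calc x * c * (4 * P) = (c * P) * (4 * x) := by ring
              _ ≤ (2 * t) * (4 * x) := by
                  apply mul_le_mul_of_nonneg_right hcP (by positivity)
              _ = (s:ℝ) := by rw [← hxs]; ring
              _ ≤ 4 * P ^ 2 * ℓ := hℓlb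
              _ = (ℓ:ℝ) * P * (4 * P) := by ring
          exact le_of_mul_le_mul_right h2 (by positivity)
        calc (x / P) ^ c ≤ ((ℓ:ℝ) / c) ^ c := by
              apply pow_le_pow_left₀ (by positivity) h1
          _ ≤ (ℓ.choose c : ℝ) := aux_choose_pow c ℓ hcl
      have hs2 : (8 * x) ^ (t - c) ≤ ((m - ℓ).choose (t - c) : ℝ) := by
        rcases Nat.eq_zero_or_pos (t - c) with h0 | h0
        · rw [h0]; simp
        · have htc : t - c ≤ m - ℓ := by omega
          have h1 : 8 * x ≤ ((m - ℓ:ℕ):ℝ) / ((t - c:ℕ):ℝ) := by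
            rw [le_div_iff₀ (by exact_mod_cast h0)]
            have h2 : ((m - ℓ:ℕ):ℝ) ≥ (s:ℝ) := by
              have : s ≤ m - ℓ := by omega
              exact_mod_cast this
            have h3 : ((t - c:ℕ):ℝ) ≤ (t:ℝ) := by
              have : t - c ≤ t := by omega
              exact_mod_cast this
            calc 8 * x * ((t - c:ℕ):ℝ) ≤ 8 * x * t := by
                  apply mul_le_mul_of_nonneg_left h3 (by positivity)
              _ = (s:ℝ) := hxs
              _ ≤ ((m - ℓ:ℕ):ℝ) := h2
          calc (8 * x) ^ (t - c) ≤ (((m - ℓ:ℕ):ℝ) / ((t - c:ℕ):ℝ)) ^ (t - c) := by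
                apply pow_le_pow_left₀ (by positivity) h1
            _ ≤ ((m - ℓ).choose (t - c) : ℝ) := aux_choose_pow (t - c) (m - ℓ) htc
      calc x ^ t ≤ (x / P) ^ c * (8 * x) ^ (t - c) := hkey
        _ ≤ (ℓ.choose c : ℝ) * ((m - ℓ).choose (t - c) : ℝ) := by
            apply mul_le_mul hs1 hs2 (by positivity) (by positivity)
        _ = ((ℓ.choose c * (m - ℓ).choose (t - c) : ℕ) : ℝ) := by push_cast; ring
        _ ≤ _ := by exact_mod_cast hcnt
    · -- Branch B-b : the top band is heavy
      have hHm : 2 * ((t : ℝ) * u) ≤ ∑ i ∈ Finset.univ.filter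
          (fun i => (2:ℝ) ^ b * u ≤ (v i) ^ 2), (v i) ^ 2 := by
        classical
        set Lev : ℕ → Finset (Fin m) := fun j => Finset.univ.filter
            (fun i => 2 ^ j * u ≤ (v i) ^ 2 ∧ (v i) ^ 2 < 2 ^ (j + 1) * u) with hLev
        set H := Finset.univ.filter (fun i => (2:ℝ) ^ b * u ≤ (v i) ^ 2) with hHd
        by_contra hH
        push_neg at hBa hH
        -- window finding
        have hwin : ∀ (B : ℕ) (y : ℝ), u ≤ y → y < 2 ^ B * u →
            ∃ j < B, (2:ℝ) ^ j * u ≤ y ∧ y < 2 ^ (j + 1) * u := by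
          intro B
          induction B with
          | zero => intro y h1 h2; simp at h2; linarith
          | succ B ih =>
            intro y h1 h2
            by_cases hy : y < 2 ^ B * u
            · obtain ⟨j, hj, hw⟩ := ih y h1 hy; exact ⟨j, by omega, hw⟩
            · exact ⟨B, by omega, le_of_not_gt hy, h2⟩
        -- coverage
        have hcov : Finset.univ.filter (fun i => u ≤ (v i) ^ 2) ⊆ (Finset.range b).biUnion Lev ∪ H := by
          intro i hi
          rw [Finset.mem_filter] at hi
          by_cases hh : (2:ℝ) ^ b * u ≤ (v i) ^ 2
          · exact Finset.mem_union_right _ (Finset.mem_filter.mpr ⟨Finset.mem_univ _, hh⟩)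
          · obtain ⟨j, hj, hw⟩ := hwin b _ hi.2 (lt_of_not_ge hh)
            refine Finset.mem_union_left _ (Finset.mem_biUnion.mpr ⟨j, Finset.mem_range.mpr hj, ?_⟩)
            rw [hLev]; exact Finset.mem_filter.mpr ⟨Finset.mem_univ _, hw⟩
        have hnn : ∀ i ∈ Finset.univ, (0:ℝ) ≤ (v i) ^ 2 := fun i _ => sq_nonneg _
        have hudefm1 : ∑ i ∈ Finset.univ.filter (fun i => u ≤ (v i) ^ 2), (v i) ^ 2
            ≤ ∑ i ∈ (Finset.range b).biUnion Lev ∪ H, (v i) ^ 2 :=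
          Finset.sum_le_sum_of_subset_of_nonneg hcov (fun i _ _ => sq_nonneg _)
        have hudefm2 : ∑ i ∈ (Finset.range b).biUnion Lev ∪ H, (v i) ^ 2
            ≤ (∑ i ∈ (Finset.range b).biUnion Lev, (v i) ^ 2) + ∑ i ∈ H, (v i) ^ 2 := by
          have hui := Finset.sum_union_inter (s₁ := (Finset.range b).biUnion Lev) (s₂ := H)
            (f := fun i => (v i) ^ 2)
          have hint : (0:ℝ) ≤ ∑ i ∈ ((Finset.range b).biUnion Lev) ∩ H, (v i) ^ 2 :=
            Finset.sum_nonneg (fun i _ => sq_nonneg _)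
          linarith
        have hdisj : ∀ j ∈ Finset.range b, ∀ k ∈ Finset.range b, j ≠ k → Disjoint (Lev j) (Lev k) := by
          have key : ∀ j k, j < k → Disjoint (Lev j) (Lev k) := by
            intro j k hjk
            refine Finset.disjoint_left.mpr (fun i hij hik => ?_)
            rw [hLev, Finset.mem_filter] at hij hik
            have h1 : (2:ℝ) ^ (j + 1) ≤ 2 ^ k := by
              apply pow_le_pow_right₀ one_le_two; omega
            nlinarith [hij.2.2, hik.2.1, hu0]
          intro j _ k _ hjk
          rcases Nat.lt_or_ge j k with h | h
          · exact key j k h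
          · exact (key k j (by omega)).symm
        have hudefm3 : ∑ i ∈ (Finset.range b).biUnion Lev, (v i) ^ 2
            = ∑ j ∈ Finset.range b, ∑ i ∈ Lev j, (v i) ^ 2 := by
          apply Finset.sum_biUnion
          intro j hj k hk hjk
          exact hdisj j hj k hk hjk
        have hudefm4 : ∑ j ∈ Finset.range b, ∑ i ∈ Lev j, (v i) ^ 2
            < ∑ j ∈ Finset.range b, W / 2 ^ (j + 2) := by
          apply Finset.sum_lt_sum_of_nonempty ⟨0, Finset.mem_range.mpr (by omega)⟩
          intro j hj
          exact hBa j (Finset.mem_range.mp hj)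
        have hgeo : ∑ j ∈ Finset.range b, W / 2 ^ (j + 2) = W / 2 * (1 - (1/2:ℝ) ^ b) := by
          have hterm : ∀ j : ℕ, W / 2 ^ (j + 2) = W / 4 * (1/2:ℝ) ^ j := by
            intro j
            have h4 : (2:ℝ) ^ (j + 2) = 4 * 2 ^ j := by rw [pow_add]; ring
            rw [h4, div_pow, one_pow, div_mul_div_comm, mul_one]
          rw [Finset.sum_congr rfl (fun j _ => hterm j), ← Finset.mul_sum]
          rw [geom_sum_eq (by norm_num)]
          have : ((1:ℝ)/2 - 1) ≠ 0 := by norm_num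
          field_simp
          ring
        -- final numeric contradiction
        have htub : 2 * ((t:ℝ) * u) ≤ W / 2 * (1/2:ℝ) ^ b := by
          -- 2 t u = t W / s ; need t W / s ≤ W/2^{b+1} i.e. 2^{b+1} t ≤ s, s = 8 x t ≥ 8·2^{b-1} t = 2^{b+2} t
          have hxb : (2:ℝ) ^ b ≤ 2 * x := by
            have : (2:ℝ) ^ b = 2 * 2 ^ (b - 1) := by
              rw [← pow_succ', Nat.sub_add_cancel hb1]
            rw [this]; linarith
          have hs8 : 8 * x * (t:ℝ) = s := by rw [hxdef]; field_simp
          have h2b : (0:ℝ) < 2 ^ b := by positivity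
          have hx0 : (0:ℝ) < x := lt_of_lt_of_le (by positivity) hxlow
          have e1 : 2 * ((t:ℝ) * u) = (t:ℝ) * W / s := by
            rw [hudef]; field_simp
          have e2 : W / 2 * (1/2:ℝ) ^ b = W / (2 * 2 ^ b) := by
            rw [div_pow, one_pow, div_mul_div_comm, mul_one]
          rw [e1, e2, div_le_div_iff₀ (by positivity) (by positivity)]
          -- t*W*(2*2^b) ≤ W*s  since 2^b ≤ 2x and s = 8xt
          have htW : (0:ℝ) ≤ (t:ℝ) * W := by positivity
          nlinarith [mul_le_mul_of_nonneg_right hxb htW, hs8, hW0,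
            (by exact_mod_cast ht : (0:ℝ) < (t:ℝ))]
        linarith [hQmass, hudefm1, hudefm2, hudefm3.le, hudefm4, hgeo.le, hH, htub]
      refine le_trans (min_le_right _ _) ?_
      classical
      set H := Finset.univ.filter (fun i => (2:ℝ) ^ b * u ≤ (v i) ^ 2) with hHdef
      set h := H.card with hhdef
      have hHsupp : H ⊆ Finset.univ.filter (fun i => v i ≠ 0) := by
        intro i hi
        rw [hHdef, Finset.mem_filter] at hi
        rw [Finset.mem_filter]
        refine ⟨Finset.mem_univ _, fun h0 => ?_⟩
        rw [h0] at hi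
        have : (0:ℝ) < 2 ^ b * u := by positivity
        simp at hi
        nlinarith [hi]
      have hhs : h ≤ s := le_trans (Finset.card_le_card hHsupp) hsupp
      have hne : H.Nonempty := by
        rcases Finset.eq_empty_or_nonempty H with h0 | h0
        · exfalso; rw [h0, Finset.sum_empty] at hHm
          nlinarith [hu0, (by exact_mod_cast ht : (0:ℝ) < (t:ℝ))]
        · exact h0
      have hbt : 2 ^ b < t := by
        obtain ⟨i₁, hi₁⟩ := hne
        rw [hHdef, Finset.mem_filter] at hi₁
        have h1 : (2:ℝ) ^ b * u ≤ (v i₁) ^ 2 := hi₁.2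
        have h2 : (v i₁) ^ 2 < (t:ℝ) * u := hA' i₁
        have h3 : (2:ℝ) ^ b < (t:ℝ) :=
          lt_of_mul_lt_mul_right (lt_of_le_of_lt h1 h2) (le_of_lt hu0)
        have h4 : ((2 ^ b : ℕ) : ℝ) < (t : ℝ) := by push_cast; exact h3
        exact_mod_cast h4
      obtain ⟨c, hcdef⟩ : ∃ c, c = (t - 1) / 2 ^ b + 1 := ⟨_, rfl⟩
      have hc0 : 0 < c := hcdef ▸ Nat.succ_pos _
      have hcb : t ≤ c * 2 ^ b := by
        have h1 : (t - 1) / 2 ^ b < c := by rw [hcdef]; exact Nat.lt_succ_self _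
        have h2 : t - 1 < c * 2 ^ b := (Nat.div_lt_iff_lt_mul (by positivity)).mp h1
        omega
      have hct : c ≤ t := by
        have h1 := Nat.div_le_self (t - 1) (2 ^ b)
        rw [hcdef]; omega
      set p := min c h with hpdef
      have hpc : p ≤ c := min_le_left _ _
      have hph : p ≤ h := min_le_right _ _
      have hpt : p ≤ t := le_trans hpc hct
      have hgood : ∀ C ∈ Finset.powersetCard p H,
          (t : ℝ) * W / (2 * s) ≤ ∑ i ∈ C, (v i) ^ 2 := by
        intro C hC
        rw [Finset.mem_powersetCard] at hC
        rw [hτu]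
        rcases le_or_gt c h with hch | hhc
        · -- p = c : c elements each ≥ 2^b u
          have hpc' : p = c := min_eq_left hch
          have hlow : ∀ i ∈ C, (2:ℝ) ^ b * u ≤ (v i) ^ 2 := by
            intro i hi
            have := hC.1 hi
            rw [hHdef, Finset.mem_filter] at this
            exact this.2
          have h1 : (C.card:ℝ) * ((2:ℝ) ^ b * u) ≤ ∑ i ∈ C, (v i) ^ 2 := by
            have := Finset.card_nsmul_le_sum C (fun i => (v i) ^ 2) ((2:ℝ) ^ b * u) hlow
            rwa [nsmul_eq_mul] at this
          rw [hC.2, hpc'] at h1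
          have h2 : (t:ℝ) * u ≤ (c:ℝ) * ((2:ℝ) ^ b * u) := by
            have h3 : ((t:ℕ):ℝ) ≤ ((c * 2 ^ b : ℕ):ℝ) := by exact_mod_cast hcb
            push_cast at h3
            calc (t:ℝ) * u ≤ ((c:ℝ) * 2 ^ b) * u := by
                  apply mul_le_mul_of_nonneg_right h3 (le_of_lt hu0)
              _ = (c:ℝ) * ((2:ℝ) ^ b * u) := by ring
          linarith
        · -- p = h : C = H and the whole band has mass ≥ 2tu
          have hph' : p = h := min_eq_right (le_of_lt hhc)
          have hCH : C = H := by
            apply Finset.eq_of_subset_of_card_le hC.1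
            rw [hC.2, hph', hhdef]
          rw [hCH]
          have htu : (0:ℝ) ≤ (t:ℝ) * u := by positivity
          linarith
      have hcnt := aux_count v ((t : ℝ) * W / (2 * s)) t p H hpt hgood
      rw [← hhdef] at hcnt
      -- exponent facts
      have hexp : (2:ℝ) ^ (b * c) ≤ (2:ℝ) ^ (3 * (t - p)) := by
        apply pow_le_pow_right₀ one_le_two
        have h := aux_nl b t hbt
        rw [← hcdef] at h
        have h2 : b * c + 3 * c ≤ 3 * t := by
          calc b * c + 3 * c = (b + 3) * c := by ring
            _ ≤ 3 * t := h
        generalize hA : b * c = A at h2 ⊢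
        omega
      have hxp : x ^ p ≤ (2:ℝ) ^ (3 * (t - p)) := by
        calc x ^ p ≤ x ^ c := pow_le_pow_right₀ hx1 hpc
          _ ≤ ((2:ℝ) ^ b) ^ c := pow_le_pow_left₀ (le_of_lt hx0) (le_of_lt hxhigh) c
          _ = (2:ℝ) ^ (b * c) := by rw [← pow_mul]
          _ ≤ (2:ℝ) ^ (3 * (t - p)) := hexp
      have hkey : x ^ t ≤ (8 * x) ^ (t - p) := by
        have e1 : (8 * x) ^ (t - p) = (2:ℝ) ^ (3 * (t - p)) * x ^ (t - p) := by
          rw [mul_pow, show (8:ℝ) = 2 ^ 3 by norm_num, ← pow_mul]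
        have e2 : x ^ t = x ^ p * x ^ (t - p) := by
          rw [← pow_add]; congr 1; omega
        rw [e1, e2]
        apply mul_le_mul_of_nonneg_right hxp (by positivity)
      have hs2 : (8 * x) ^ (t - p) ≤ ((m - h).choose (t - p) : ℝ) := by
        rcases Nat.eq_zero_or_pos (t - p) with h0 | h0
        · rw [h0]; simp
        · have htc : t - p ≤ m - h := by omega
          have h1 : 8 * x ≤ ((m - h:ℕ):ℝ) / ((t - p:ℕ):ℝ) := by
            rw [le_div_iff₀ (by exact_mod_cast h0)]
            have h2 : ((m - h:ℕ):ℝ) ≥ (s:ℝ) := by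
              have : s ≤ m - h := by omega
              exact_mod_cast this
            have h3 : ((t - p:ℕ):ℝ) ≤ (t:ℝ) := by
              have : t - p ≤ t := by omega
              exact_mod_cast this
            calc 8 * x * ((t - p:ℕ):ℝ) ≤ 8 * x * t := by
                  apply mul_le_mul_of_nonneg_left h3 (by positivity)
              _ = (s:ℝ) := hxs
              _ ≤ ((m - h:ℕ):ℝ) := h2
          calc (8 * x) ^ (t - p) ≤ (((m - h:ℕ):ℝ) / ((t - p:ℕ):ℝ)) ^ (t - p) := by
                apply pow_le_pow_left₀ (by positivity) h1
            _ ≤ ((m - h).choose (t - p) : ℝ) := aux_choose_pow (t - p) (m - h) htc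
      have hic : 1 ≤ (h.choose p : ℝ) := by
        have : 0 < h.choose p := Nat.choose_pos hph
        exact_mod_cast this
      calc x ^ t ≤ (8 * x) ^ (t - p) := hkey
        _ ≤ ((m - h).choose (t - p) : ℝ) := hs2
        _ ≤ (h.choose p : ℝ) * ((m - h).choose (t - p) : ℝ) := by
            nlinarith [hs2, pow_nonneg (by positivity : (0:ℝ) ≤ 8 * x) (t - p)]
        _ = ((h.choose p * (m - h).choose (t - p) : ℕ) : ℝ) := by push_cast; ring
        _ ≤ _ := by exact_mod_cast hcnt
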